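/- Let R be a commutative ring, x_1,...,x_r, f_1,...,f_r ∈ R, a ≥ 1, and suppose there are matrices [r_{ij}], [s_{jl}] over R with x_i^a = Σ_j r_{ij} f_j and f_j = Σ_l s_{jl} x_l for all i, j. If (x_1,...,x_r) is a regular sequence, then det[r_{ij}]·det[s_{jl}] ≡ x_1^{a-1}···x_r^{a-1} mod (x_1^a, ..., x_r^a). -/

import Mathlib

open Matrix

/-- If `A *ᵥ x = 0` and row `k` of `A` is the Koszul vector `x l • e j - x j • e l`
(`j ≠ l`), then `det A = 0`. -/
theorem det_eq_zero_of_koszul_row {S : Type*} [CommRing S] {r : ℕ} (x : Fin r → S)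
    (A : Matrix (Fin r) (Fin r) S) (k j l : Fin r) (hjl : j ≠ l)
    (hrow : A k = fun p => x l * (Pi.single j 1 : Fin r → S) p - x j * (Pi.single l 1 : Fin r → S) p)
    (hAx : A *ᵥ x = 0) : A.det = 0 := by
  classical
  set Uj := A.updateRow k (Pi.single j 1) with hUj
  set Ul := A.updateRow k (Pi.single l 1) with hUl
  set V := Uj.updateCol l (Pi.single k 1) with hV
  -- Step (i) : det A = x l * det Uj - x j * det Ul
  have h1 : A.det = x l * Uj.det - x j * Ul.det := by
    conv_lhs => rw [← A.updateRow_eq_self k, hrow]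
    have hsplit : (fun p => x l * (Pi.single j 1 : Fin r → S) p - x j * (Pi.single l 1 : Fin r → S) p)
        = (x l • (Pi.single j 1 : Fin r → S)) + ((- x j) • (Pi.single l 1 : Fin r → S)) := by
      funext p; simp [smul_eq_mul]; ring
    rw [hsplit, det_updateRow_add, det_updateRow_smul, det_updateRow_smul]
    ring
  -- rows of Uj dotted with x
  have hUjx : Uj *ᵥ x = Pi.single k (x j) := by
    funext i
    by_cases hik : i = k
    · subst hik
      simp [Matrix.mulVec, dotProduct, hUj, Pi.single_apply, ite_mul]
    · have : (Uj *ᵥ x) i = (A *ᵥ x) i := by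
        simp [Matrix.mulVec, dotProduct, hUj, Matrix.updateRow_ne hik]
      rw [this, hAx]
      simp [Pi.single_apply, hik]
  -- Step (ii) : x l * det Uj = x j * det V
  have h2 : x l * Uj.det = x j * V.det := by
    have e1 : (Uj.updateCol l (fun i => ∑ p, x p • Uj i p)).det = x l • Uj.det :=
      det_updateCol_sum Uj l x
    have e2 : (fun i => ∑ p, x p • Uj i p) = Pi.single k (x j) := by
      funext i
      have := congrFun hUjx i
      simpa [Matrix.mulVec, dotProduct, mul_comm] using this
    have e3 : (Pi.single k (x j) : Fin r → S) = x j • (Pi.single k 1 : Fin r → S) := by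
      funext i; simp [Pi.single_apply]
    rw [e2, e3, det_updateCol_smul] at e1
    rw [smul_eq_mul] at e1
    rw [← e1]
  -- Step (iii) : det Ul = det V, both equal det W
  have h3 : Ul.det = V.det := by
    set W : Matrix (Fin r) (Fin r) S :=
      Matrix.of fun i p => if i = k then (Pi.single l 1 : Fin r → S) p
        else if p = l then 0 else A i p with hW
    have hW1 : Ul.det = W.det := by
      apply det_eq_of_forall_row_eq_smul_add_const (fun i => if i = k then 0 else A i l) k
        (by simp)
      intro i p
      by_cases hik : i = k
      · subst hik
        simp [hUl, Matrix.updateRow_self, hW]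
      · simp only [hW, Matrix.of_apply, if_neg hik, hUl, Matrix.updateRow_ne hik, if_pos rfl]
        by_cases hpl : p = l
        · subst hpl; simp
        · simp [hpl, Pi.single_apply]
    have hW2 : V = W.updateCol j (fun i => W i j + W i l) := by
      ext i p
      by_cases hpj : p = j
      · subst hpj
        rw [Matrix.updateCol_self]
        by_cases hik : i = k
        · subst hik
          simp [hV, hW, Matrix.updateCol_ne (Ne.symm hjl), hUj,
            Matrix.updateRow_self, Pi.single_apply, hjl, Ne.symm hjl]
        · simp [hV, hW, hik, Matrix.updateCol_ne (Ne.symm hjl), hUj,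
            Matrix.updateRow_ne hik, hjl, Pi.single_apply]
      · rw [Matrix.updateCol_ne hpj]
        by_cases hpl : p = l
        · subst hpl
          by_cases hik : i = k <;>
            simp [hV, hW, hik, Matrix.updateCol_self, Pi.single_apply]
        · by_cases hik : i = k <;>
            simp [hV, hW, hik, hpl, Matrix.updateCol_ne hpl, hUj,
              Matrix.updateRow_ne, Pi.single_apply, hpj]
    have : V.det = W.det := by
      rw [hW2]; exact det_updateCol_add_self W hjl
    rw [hW1, this]
  rw [h1, h3, ← h2]
  ring

/-- Any relation on a (weakly) regular sequence is a combination of Koszul relations. -/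
theorem syzygy_koszul {R : Type*} [CommRing R] {r : ℕ} (x : Fin r → R)
    (hreg : RingTheory.Sequence.IsWeaklyRegular R (List.ofFn x)) (c : Fin r → R)
    (hc : ∑ p, c p * x p = 0) :
    ∃ b : Fin r → Fin r → R, ∀ p, c p =
      ∑ u, ∑ w, b u w * (x w * (Pi.single u 1 : Fin r → R) p
        - x u * (Pi.single w 1 : Fin r → R) p) := by
  classical
  suffices H : ∀ m : ℕ, m ≤ r → ∀ c : Fin r → R, (∀ p : Fin r, m ≤ (p : ℕ) → c p = 0) →
      ∑ p, c p * x p = 0 → ∃ b : Fin r → Fin r → R, ∀ p, c p =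
      ∑ u, ∑ w, b u w * (x w * (Pi.single u 1 : Fin r → R) p
        - x u * (Pi.single w 1 : Fin r → R) p) by
    exact H r le_rfl c (fun p hp => absurd p.isLt (by omega)) hc
  intro m
  induction m with
  | zero =>
    intro _ c hsupp _
    refine ⟨0, fun p => ?_⟩
    have : c p = 0 := hsupp p (Nat.zero_le _)
    simp [this]
  | succ m ih =>
    intro hm c hsupp hsum
    have hmr : m < r := hm
    set m' : Fin r := ⟨m, hmr⟩ with hm'
    set J : Ideal R := Ideal.ofList ((List.ofFn x).take m) with hJ
    -- split the sum
    have hsplit : ∑ p, c p * x p =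
        (∑ p ∈ Finset.univ.filter (fun p : Fin r => (p : ℕ) < m), c p * x p) + c m' * x m' := by
      rw [← Finset.sum_filter_add_sum_filter_not Finset.univ (fun p : Fin r => (p : ℕ) < m)]
      congr 1
      apply Finset.sum_eq_single_of_mem
      · simp [hm']
      · intro p hp hpne
        have h1 : ¬ ((p : ℕ) < m) := (Finset.mem_filter.mp hp).2
        have : m + 1 ≤ (p : ℕ) := by
          rcases Nat.lt_or_ge (p : ℕ) (m+1) with h | h
          · exfalso; exact hpne (Fin.ext (show (p : ℕ) = m by omega))
          · exact h
        simp [hsupp p this]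
    -- membership of the small x's in J
    have hxJ : ∀ p : Fin r, (p : ℕ) < m → x p ∈ J := by
      intro p hp
      apply Ideal.subset_span
      have hlen : (p : ℕ) < ((List.ofFn x).take m).length := by
        simp [List.length_take, List.length_ofFn]; omega
      have : ((List.ofFn x).take m)[(p : ℕ)] = x p := by
        simp [List.getElem_take, List.getElem_ofFn]
      exact this ▸ List.getElem_mem hlen
    have hcmJ : c m' * x m' ∈ J := by
      have : c m' * x m' = - ∑ p ∈ Finset.univ.filter (fun p : Fin r => (p : ℕ) < m),
          c p * x p := by
        rw [hsum] at hsplit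
        exact eq_neg_of_add_eq_zero_right hsplit.symm
      rw [this]
      exact neg_mem (Ideal.sum_mem _ (fun p hp =>
        Ideal.mul_mem_left _ _ (hxJ p (Finset.mem_filter.mp hp).2)))
    -- regularity gives c m' ∈ J
    have hreg' := hreg.regular_mod_prev m (by simp [List.length_ofFn]; omega)
    have hgetm : (List.ofFn x)[m]'(by simp [List.length_ofFn]; omega) = x m' := by
      simp [List.getElem_ofFn]; rfl
    have hsmul_top : (J • ⊤ : Submodule R R) = J := by
      rw [Ideal.smul_eq_mul, Ideal.mul_top]
    have hcm : c m' ∈ J := by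
      have h0 : (List.ofFn x)[m]'(by simp [List.length_ofFn]; omega) •
          Submodule.Quotient.mk (p := (J • ⊤ : Submodule R R)) (c m') = 0 := by
        rw [hgetm, ← Submodule.Quotient.mk_smul]
        rw [Submodule.Quotient.mk_eq_zero, hsmul_top]
        rw [smul_eq_mul, mul_comm]; exact hcmJ
      have h1 : Submodule.Quotient.mk (p := (J • ⊤ : Submodule R R)) (c m') = 0 :=
        hreg' (by simpa using h0)
      rw [Submodule.Quotient.mk_eq_zero, hsmul_top] at h1
      exact h1
    -- coefficients for c m' in terms of the first m elements
    set g : Fin m → R := fun q => x ⟨(q : ℕ), lt_trans q.isLt hmr⟩ with hg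
    have hJr : J = Ideal.span (Set.range g) := by
      rw [hJ]
      apply congrArg Ideal.span
      ext y
      simp only [Set.mem_setOf_eq, Set.mem_range, List.mem_iff_getElem]
      constructor
      · rintro ⟨i, hi, rfl⟩
        have him : i < m := by simp [List.length_take, List.length_ofFn] at hi; omega
        refine ⟨⟨i, him⟩, ?_⟩
        simp [hg, List.getElem_take, List.getElem_ofFn]
      · rintro ⟨q, rfl⟩
        refine ⟨(q : ℕ), by simp [List.length_take, List.length_ofFn]; omega, ?_⟩
        simp [hg, List.getElem_take, List.getElem_ofFn]
    obtain ⟨d0, hd0⟩ := (Submodule.mem_span_range_iff_exists_fun R).mp (hJr ▸ hcm)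
    set d : Fin r → R := fun p => if h : (p : ℕ) < m then d0 ⟨(p : ℕ), h⟩ else 0 with hd
    have hdsupp : ∀ p : Fin r, m ≤ (p : ℕ) → d p = 0 := by
      intro p hp; simp only [hd]; rw [dif_neg (by omega)]
    have hdm' : d m' = 0 := hdsupp m' le_rfl
    have hdsum : ∑ p, d p * x p = c m' := by
      set F : ℕ → R := fun i => if h : i < r then d ⟨i, h⟩ * x ⟨i, h⟩ else 0 with hF
      have e1 : ∑ p : Fin r, d p * x p = ∑ i ∈ Finset.range r, F i := by
        rw [← Fin.sum_univ_eq_sum_range]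
        apply Finset.sum_congr rfl
        intro p _
        simp only [hF]
        rw [dif_pos p.isLt]
      have e2 : ∑ i ∈ Finset.range r, F i = ∑ i ∈ Finset.range m, F i := by
        symm
        apply Finset.sum_subset (Finset.range_subset_range.mpr hmr.le)
        intro i _ hnot
        have : m ≤ i := by simpa using hnot
        simp only [hF]
        split
        · rw [show d ⟨i, by omega⟩ = 0 from hdsupp _ this, zero_mul]
        · rfl
      have e3 : ∑ i ∈ Finset.range m, F i = ∑ q : Fin m, d0 q • g q := by
        rw [← Fin.sum_univ_eq_sum_range]
        apply Finset.sum_congr rfl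
        intro q _
        simp only [hF, hg, hd]
        rw [dif_pos (lt_trans q.isLt hmr)]
        rw [dif_pos q.isLt]
        simp [smul_eq_mul]
      rw [e1, e2, e3, hd0]
    -- the corrected syzygy supported below m
    set c'' : Fin r → R := fun p => if (p : ℕ) < m then c p + d p * x m' else 0 with hc''
    have hsupp'' : ∀ p : Fin r, m ≤ (p : ℕ) → c'' p = 0 := by
      intro p hp; simp only [hc'']; rw [if_neg (by omega)]
    have hterm : ∀ p : Fin r, c'' p * x p =
        (c p + d p * x m') * x p - (if p = m' then c m' * x m' else 0) := by
      intro p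
      by_cases hpm : p = m'
      · subst hpm
        simp only [hc'', if_pos rfl]
        rw [if_neg (by simp [hm']), hdm']
        simp
      · rw [if_neg hpm]
        by_cases hplt : (p : ℕ) < m
        · simp only [hc'', if_pos hplt]; ring
        · have hge : m + 1 ≤ (p : ℕ) := by
            rcases Nat.lt_or_ge (p : ℕ) (m + 1) with h | h
            · exfalso; exact hpm (Fin.ext (show (p : ℕ) = m by omega))
            · exact h
          simp only [hc'', if_neg hplt]
          rw [hsupp p hge, hdsupp p (by omega)]
          ring
    have hsum'' : ∑ p, c'' p * x p = 0 := by
      rw [Finset.sum_congr rfl (fun p _ => hterm p), Finset.sum_sub_distrib]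
      have eA : ∑ p : Fin r, (c p + d p * x m') * x p = x m' * c m' := by
        have : ∀ p : Fin r, (c p + d p * x m') * x p
            = c p * x p + x m' * (d p * x p) := by intro p; ring
        rw [Finset.sum_congr rfl (fun p _ => this p), Finset.sum_add_distrib, hsum,
          ← Finset.mul_sum, hdsum]
        ring
      have eB : ∑ p : Fin r, (if p = m' then c m' * x m' else 0) = c m' * x m' := by
        simp [Finset.sum_ite_eq']
      rw [eA, eB]
      ring
    obtain ⟨b'', hb''⟩ := ih (by omega) c'' hsupp'' hsum''
    refine ⟨fun u w => b'' u w + (if u = m' then d w else 0), fun p => ?_⟩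
    have expand : ∀ u w : Fin r,
        (b'' u w + (if u = m' then d w else 0)) *
          (x w * (Pi.single u 1 : Fin r → R) p - x u * (Pi.single w 1 : Fin r → R) p)
        = b'' u w * (x w * (Pi.single u 1 : Fin r → R) p
            - x u * (Pi.single w 1 : Fin r → R) p)
          + (if u = m' then d w * (x w * (Pi.single u 1 : Fin r → R) p
            - x u * (Pi.single w 1 : Fin r → R) p) else 0) := by
      intro u w
      by_cases hum : u = m' <;> simp [hum] <;> ring
    rw [Finset.sum_congr rfl (fun u _ => Finset.sum_congr rfl (fun w _ => expand u w))]
    rw [Finset.sum_congr rfl (fun u _ => Finset.sum_add_distrib), Finset.sum_add_distrib]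
    rw [← hb'' p]
    have hsecond : (∑ u : Fin r, ∑ w : Fin r, if u = m' then d w *
        (x w * (Pi.single u 1 : Fin r → R) p - x u * (Pi.single w 1 : Fin r → R) p) else 0)
        = (if p = m' then c m' else 0) - d p * x m' := by
      have : ∀ u : Fin r, (∑ w : Fin r, if u = m' then d w *
          (x w * (Pi.single u 1 : Fin r → R) p
            - x u * (Pi.single w 1 : Fin r → R) p) else 0)
          = if u = m' then (∑ w : Fin r, d w *
            (x w * (Pi.single m' 1 : Fin r → R) p
              - x m' * (Pi.single w 1 : Fin r → R) p)) else 0 := by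
        intro u
        by_cases hum : u = m'
        · subst hum; simp
        · simp [hum]
      rw [Finset.sum_congr rfl (fun u _ => this u), Finset.sum_ite_eq' Finset.univ m']
      rw [if_pos (Finset.mem_univ m')]
      have e4 : ∀ w : Fin r, d w * (x w * (Pi.single m' 1 : Fin r → R) p
          - x m' * (Pi.single w 1 : Fin r → R) p)
          = d w * x w * (Pi.single m' 1 : Fin r → R) p
            - (if w = p then d w * x m' else 0) := by
        intro w
        rw [Pi.single_apply w (1 : R) p]
        by_cases hwp : w = p
        · subst hwp; simp; ring
        · simp [hwp, Ne.symm hwp]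
          ring
      rw [Finset.sum_congr rfl (fun w _ => e4 w), Finset.sum_sub_distrib]
      have s1 : ∑ w : Fin r, d w * x w * (Pi.single m' 1 : Fin r → R) p
          = (if p = m' then c m' else 0) := by
        rw [← Finset.sum_mul, hdsum, Pi.single_apply]
        by_cases hpm : p = m' <;> simp [hpm]
      have s2 : ∑ w : Fin r, (if w = p then d w * x m' else 0) = d p * x m' := by
        rw [Finset.sum_ite_eq' Finset.univ p (fun w => d w * x m')]
        simp
      rw [s1, s2]
    rw [hsecond]
    by_cases hpm : p = m'
    · subst hpm
      simp only [hc'', if_pos rfl]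
      rw [if_neg (by simp [hm']), hdm']
      simp
    · rw [if_neg hpm]
      simp only [hc'']
      by_cases hplt : (p : ℕ) < m
      · rw [if_pos hplt]; ring
      · have hge : m + 1 ≤ (p : ℕ) := by
          rcases Nat.lt_or_ge (p : ℕ) (m + 1) with h | h
          · exfalso; exact hpm (Fin.ext (show (p : ℕ) = m by omega))
          · exact h
        rw [if_neg hplt, hsupp p hge, hdsupp p (by omega)]
        ring

theorem det_updateRow_finset_sum {S : Type*} [CommRing S] {n α : Type*} [DecidableEq n]
    [Fintype n] (A : Matrix n n S) (i : n) (s : Finset α) (v : α → n → S) :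
    (A.updateRow i (∑ t ∈ s, v t)).det = ∑ t ∈ s, (A.updateRow i (v t)).det := by
  classical
  induction s using Finset.induction_on with
  | empty =>
    rw [Finset.sum_empty, Finset.sum_empty]
    exact Matrix.det_eq_zero_of_row_eq_zero i (fun j => by simp)
  | insert _ _ h ih =>
    rw [Finset.sum_insert h, Finset.sum_insert h, Matrix.det_updateRow_add, ih]

theorem det_eq_det_of_koszul_rows {S : Type*} [CommRing S] {r : ℕ} (x : Fin r → S)
    (M N : Matrix (Fin r) (Fin r) S) (hM : M *ᵥ x = 0) (hN : N *ᵥ x = 0)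
    (hb : ∀ i, ∃ b : Fin r → Fin r → S, ∀ p, M i p - N i p =
      ∑ u, ∑ w, b u w * (x w * (Pi.single u 1 : Fin r → S) p
        - x u * (Pi.single w 1 : Fin r → S) p)) :
    M.det = N.det := by
  classical
  set C : Finset (Fin r) → Matrix (Fin r) (Fin r) S :=
    fun s => Matrix.of fun i p => if i ∈ s then N i p else M i p with hC
  have hCrow : ∀ s (i' : Fin r), ∑ p, (C s) i' p * x p = 0 := by
    intro s i'
    by_cases h : i' ∈ s
    · have := congrFun hN i'
      simpa [hC, h, Matrix.mulVec, dotProduct] using this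
    · have := congrFun hM i'
      simpa [hC, h, Matrix.mulVec, dotProduct] using this
  have claim : ∀ s : Finset (Fin r), (C s).det = M.det := by
    intro s
    induction s using Finset.induction_on with
    | empty =>
      have : C ∅ = M := by ext i p; simp [hC]
      rw [this]
    | @insert i s hi ih =>
      have key : C (insert i s) = (C s).updateRow i (N i) := by
        ext i' p
        by_cases h : i' = i
        · subst h; simp [hC, Matrix.updateRow_self]
        · simp [hC, Matrix.updateRow_ne h, h, Finset.mem_insert]
      have h1 : (C s).det = ((C s).updateRow i (M i)).det := by
        have : (C s).updateRow i (M i) = C s := by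
          have : M i = (C s) i := by funext p; simp [hC, hi]
          rw [this, Matrix.updateRow_eq_self]
        rw [this]
      obtain ⟨b, hbi⟩ := hb i
      have h2 : ((C s).updateRow i (M i)).det
          = ((C s).updateRow i (N i)).det + ((C s).updateRow i (M i - N i)).det := by
        rw [← Matrix.det_updateRow_add]
        congr 1
        funext p
        simp
      have h3 : ((C s).updateRow i (M i - N i)).det = 0 := by
        have hrow : (M i - N i : Fin r → S)
            = ∑ u : Fin r, (fun p => ∑ w : Fin r, b u w *
              (x w * (Pi.single u 1 : Fin r → S) p
                - x u * (Pi.single w 1 : Fin r → S) p)) := by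
          funext p
          rw [Finset.sum_apply]
          exact hbi p
        rw [hrow, det_updateRow_finset_sum]
        have inner : ∀ u : Fin r, ((C s).updateRow i (fun p => ∑ w : Fin r, b u w *
            (x w * (Pi.single u 1 : Fin r → S) p
              - x u * (Pi.single w 1 : Fin r → S) p))).det = 0 := by
          intro u
          have : (fun p => ∑ w : Fin r, b u w *
              (x w * (Pi.single u 1 : Fin r → S) p
                - x u * (Pi.single w 1 : Fin r → S) p))
              = ∑ w : Fin r, (fun p => b u w *
              (x w * (Pi.single u 1 : Fin r → S) p
                - x u * (Pi.single w 1 : Fin r → S) p)) := by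
            funext p; rw [Finset.sum_apply]
          rw [this, det_updateRow_finset_sum]
          apply Finset.sum_eq_zero
          intro w _
          have hsmul : (fun p => b u w *
              (x w * (Pi.single u 1 : Fin r → S) p
                - x u * (Pi.single w 1 : Fin r → S) p))
              = b u w • (fun p => (x w * (Pi.single u 1 : Fin r → S) p
                - x u * (Pi.single w 1 : Fin r → S) p)) := by
            funext p; simp
          rw [hsmul, Matrix.det_updateRow_smul]
          by_cases huw : u = w
          · subst huw
            rw [Matrix.det_eq_zero_of_row_eq_zero i (fun p => by simp), mul_zero]
          · rw [det_eq_zero_of_koszul_row x _ i u w huw (Matrix.updateRow_self) ?_, mul_zero]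
            funext i'
            by_cases hii : i' = i
            · subst hii
              simp only [Matrix.mulVec, dotProduct, Matrix.updateRow_self]
              simp [sub_mul, Finset.sum_sub_distrib, Pi.single_apply, ite_mul,
                Finset.sum_ite_eq']
              ring
            · simp only [Matrix.mulVec, dotProduct, Matrix.updateRow_ne hii]
              simpa using hCrow s i'
        exact Finset.sum_eq_zero (fun u _ => inner u)
      rw [key, ← ih, h1, h2, h3, add_zero]
  have := claim Finset.univ
  rw [← this]
  congr 1
  ext i p
  simp [hC]
/-- If `x i ^ a = ∑ j (r i j)(f j)` and `f j = ∑ l (s j l)(x l)`, and `(x 1,...,x r)` is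
a regular sequence, then `det[r]·det[s] ≡ x₁^{a-1}⋯x_r^{a-1} mod (x₁^a,...,x_r^a)`. -/
theorem det_mul_det_congr (R : Type*) [CommRing R] (r : ℕ) (x f : Fin r → R)
    (a : ℕ) (ha : 1 ≤ a)
    (rM sM : Matrix (Fin r) (Fin r) R)
    (hx : ∀ i, x i ^ a = ∑ j, rM i j * f j)
    (hf : ∀ j, f j = ∑ l, sM j l * x l)
    (hreg : RingTheory.Sequence.IsRegular R (List.ofFn x)) :
    rM.det * sM.det - ∏ i, x i ^ (a - 1) ∈
      Ideal.span (Set.range fun i => x i ^ a) := by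
  classical
  set I : Ideal R := Ideal.span (Set.range fun i => x i ^ a) with hI
  set π : R →+* R ⧸ I := Ideal.Quotient.mk I with hπ
  set Δ : Matrix (Fin r) (Fin r) R := Matrix.diagonal (fun i => x i ^ (a - 1)) with hΔ
  have hMx : (rM * sM) *ᵥ x = fun i => x i ^ a := by
    rw [← Matrix.mulVec_mulVec]
    have hsx : sM *ᵥ x = f := by
      funext j
      simp only [Matrix.mulVec, dotProduct]
      exact (hf j).symm
    rw [hsx]
    funext i
    simp only [Matrix.mulVec, dotProduct]
    exact (hx i).symm
  have hΔx : Δ *ᵥ x = fun i => x i ^ a := by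
    funext i
    rw [hΔ, Matrix.mulVec_diagonal, ← pow_succ]
    congr 1
    omega
  have hsyz : ∀ i, ∃ b : Fin r → Fin r → R, ∀ p, (rM * sM) i p - Δ i p =
      ∑ u, ∑ w, b u w * (x w * (Pi.single u 1 : Fin r → R) p
        - x u * (Pi.single w 1 : Fin r → R) p) := by
    intro i
    apply syzygy_koszul x hreg.toIsWeaklyRegular
    have e : ∑ p, ((rM * sM) i p - Δ i p) * x p
        = ((rM * sM) *ᵥ x) i - (Δ *ᵥ x) i := by
      simp [Matrix.mulVec, dotProduct, sub_mul, Finset.sum_sub_distrib]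
    rw [e, hMx, hΔx]
    simp
  have hmem : ∀ i : Fin r, x i ^ a ∈ I := fun i => Ideal.subset_span ⟨i, rfl⟩
  have hMq : ((rM * sM).map π) *ᵥ (fun i => π (x i)) = 0 := by
    funext i
    have e : (((rM * sM).map π) *ᵥ (fun i => π (x i))) i = π (((rM * sM) *ᵥ x) i) := by
      simp [Matrix.mulVec, dotProduct, Matrix.map_apply, map_sum]
    rw [e, hMx]
    exact Ideal.Quotient.eq_zero_iff_mem.mpr (hmem i)
  have hΔq : (Δ.map π) *ᵥ (fun i => π (x i)) = 0 := by
    funext i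
    have e : ((Δ.map π) *ᵥ (fun i => π (x i))) i = π ((Δ *ᵥ x) i) := by
      simp [Matrix.mulVec, dotProduct, Matrix.map_apply, map_sum]
    rw [e, hΔx]
    exact Ideal.Quotient.eq_zero_iff_mem.mpr (hmem i)
  have hbq : ∀ i, ∃ b : Fin r → Fin r → R ⧸ I, ∀ p,
      ((rM * sM).map π) i p - (Δ.map π) i p =
      ∑ u, ∑ w, b u w * (π (x w) * (Pi.single u 1 : Fin r → R ⧸ I) p
        - π (x u) * (Pi.single w 1 : Fin r → R ⧸ I) p) := by
    intro i
    obtain ⟨b, hb⟩ := hsyz i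
    refine ⟨fun u w => π (b u w), fun p => ?_⟩
    have := congrArg π (hb p)
    rw [map_sub, map_sum] at this
    simp only [Matrix.map_apply]
    rw [this]
    apply Finset.sum_congr rfl
    intro u _
    rw [map_sum]
    apply Finset.sum_congr rfl
    intro w _
    rw [_root_.map_mul, map_sub, _root_.map_mul, _root_.map_mul]
    congr 2 <;>
    · congr 1
      rw [Pi.single_apply, Pi.single_apply, apply_ite π, _root_.map_one, _root_.map_zero]
  have hq : ((rM * sM).map π).det = (Δ.map π).det :=
    det_eq_det_of_koszul_rows (fun i => π (x i)) _ _ hMq hΔq hbq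
  have e1 : π ((rM * sM).det) = ((rM * sM).map π).det := by
    rw [RingHom.map_det, RingHom.mapMatrix_apply]
  have e2 : π (Δ.det) = (Δ.map π).det := by
    rw [RingHom.map_det, RingHom.mapMatrix_apply]
  have hfinal : π (rM.det * sM.det) = π (∏ i, x i ^ (a - 1)) := by
    rw [← Matrix.det_mul, e1, hq, ← e2, hΔ, Matrix.det_diagonal]
  exact Ideal.Quotient.eq.mp hfinal
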